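/- Let S be a blocking semioval with exactly 25 points in PG(2,11) such that every line meets S in at most 6 points, and for each i let x_i denote the number of lines of PG(2,11) meeting S in exactly i points. Then x_4 ≡ 2 (mod 3) and x_6 ≥ 9. -/

import Mathlib

instance : Fact (Nat.Prime 11) := ⟨by norm_num⟩

/-- The points of `PG(2,11)`: the projectivization of `(ZMod 11)^3`. -/
abbrev PGPoint : Type := Projectivization (ZMod 11) (Fin 3 → ZMod 11)

/-- The lines of `PG(2,11)`: the 2-dimensional subspaces of `(ZMod 11)^3`. -/
abbrev PGLine : Type :=
  {W : Submodule (ZMod 11) (Fin 3 → ZMod 11) // Module.finrank (ZMod 11) W = 2}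

/-- Incidence: a point lies on a line when its representing 1-dimensional
subspace is contained in the line's 2-dimensional subspace. -/
def PGmem (P : PGPoint) (L : PGLine) : Prop := Projectivization.submodule P ≤ L.val

/-- The set of points lying on a line. -/
def linePts (L : PGLine) : Set PGPoint := {P | PGmem P L}

/-- The set of points of `S` lying on the line `L`. -/
def secantPts (S : Set PGPoint) (L : PGLine) : Set PGPoint := {P ∈ S | PGmem P L}

/-- A line is a `k`-secant to `S` if it meets `S` in exactly `k` points. -/
def IsSecant (S : Set PGPoint) (k : ℕ) (L : PGLine) : Prop := (secantPts S L).ncard = k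

/-- A tangent line to `S` is a 1-secant. -/
def IsTangent (S : Set PGPoint) (L : PGLine) : Prop := IsSecant S 1 L

/-- A blocking set: every line meets `S`, but `S` contains no line. -/
def IsBlockingSet (S : Set PGPoint) : Prop :=
  (∀ L : PGLine, (secantPts S L).Nonempty) ∧ ∀ L : PGLine, ¬ linePts L ⊆ S

/-- A semioval: every point of `S` lies on exactly one tangent line to `S`. -/
def IsSemioval (S : Set PGPoint) : Prop :=
  ∀ P ∈ S, ∃! L : PGLine, PGmem P L ∧ IsTangent S L

/-- A blocking semioval is both a blocking set and a semioval. -/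
def IsBlockingSemioval (S : Set PGPoint) : Prop := IsBlockingSet S ∧ IsSemioval S

open Projectivization Module Configuration

noncomputable section

abbrev V3 := Fin 3 → ZMod 11

def dotL : V3 →ₗ[ZMod 11] Module.Dual (ZMod 11) V3 :=
  LinearMap.mk₂ (ZMod 11) dotProduct
    (fun m₁ m₂ n => add_dotProduct m₁ m₂ n)
    (fun c m n => smul_dotProduct c m n)
    (fun m n₁ n₂ => dotProduct_add m n₁ n₂)
    (fun c m n => dotProduct_smul c m n)

lemma dotL_apply (u v : V3) : dotL u v = dotProduct u v := rfl

lemma dotL_injective : Function.Injective dotL := by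
  rw [← LinearMap.ker_eq_bot, Submodule.eq_bot_iff]
  intro u hu
  rw [LinearMap.mem_ker] at hu
  rw [← dotProduct_eq_zero_iff (v := u)]
  intro w
  exact congrFun (congrArg DFunLike.coe hu) w

lemma dotL_bijective : Function.Bijective dotL :=
  ⟨dotL_injective, (LinearMap.injective_iff_surjective_of_finrank_eq_finrank
    (by rw [Subspace.dual_finrank_eq])).mp dotL_injective⟩

lemma dotL_ne_zero {u : V3} (hu : u ≠ 0) : dotL u ≠ 0 := by
  intro h
  exact hu (dotL_injective (h.trans (map_zero dotL).symm))

lemma finrank_ker_dotL {u : V3} (hu : u ≠ 0) :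
    finrank (ZMod 11) (LinearMap.ker (dotL u)) = 2 := by
  have h := Module.Dual.finrank_ker_add_one_of_ne_zero (dotL_ne_zero hu)
  rw [Module.finrank_fin_fun] at h
  omega

def ptLine (w : PGPoint) : PGLine :=
  ⟨LinearMap.ker (dotL w.rep), finrank_ker_dotL w.rep_nonzero⟩

lemma orthogonal_iff (w P : PGPoint) :
    w.orthogonal P ↔ dotProduct w.rep P.rep = 0 := by
  conv_lhs => rw [← w.mk_rep, ← P.mk_rep]
  exact orthogonal_mk _ _

lemma PGmem_ptLine (P w : PGPoint) : PGmem P (ptLine w) ↔ w.orthogonal P := by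
  rw [orthogonal_iff]
  show Projectivization.submodule P ≤ LinearMap.ker (dotL w.rep) ↔ _
  rw [Projectivization.submodule_eq, Submodule.span_singleton_le_iff_mem, LinearMap.mem_ker]
  exact Iff.rfl

lemma ker_smul_vec {u : V3} (a : ZMod 11) (ha : a ≠ 0) :
    LinearMap.ker (dotL (a • u)) = LinearMap.ker (dotL u) := by
  rw [map_smul, LinearMap.ker_smul _ a ha]

lemma ptLine_mk {u : V3} (hu : u ≠ 0) :
    ptLine (Projectivization.mk (ZMod 11) u hu) = ⟨LinearMap.ker (dotL u), finrank_ker_dotL hu⟩ := by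
  obtain ⟨a, ha⟩ := (Projectivization.mk_eq_mk_iff (ZMod 11) _ _
    (Projectivization.rep_nonzero _) hu).mp (Projectivization.mk_rep (Projectivization.mk (ZMod 11) u hu))
  apply Subtype.ext
  show LinearMap.ker (dotL (Projectivization.mk (ZMod 11) u hu).rep) = LinearMap.ker (dotL u)
  rw [← ha, Units.smul_def, ker_smul_vec _ a.ne_zero]

lemma ptLine_bijective : Function.Bijective ptLine := by
  constructor
  · intro w w' h
    have hk : LinearMap.ker (dotL w.rep) = LinearMap.ker (dotL w'.rep) :=
      congrArg Subtype.val h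
    obtain ⟨x, hx⟩ : ∃ x, dotL w.rep x ≠ 0 := by
      by_contra hc
      push_neg at hc
      exact dotL_ne_zero w.rep_nonzero (LinearMap.ext hc)
    have hx' : dotL w'.rep x ≠ 0 := by
      intro h0
      exact hx (by rw [← LinearMap.mem_ker, hk, LinearMap.mem_ker]; exact h0)
    set c : ZMod 11 := dotL w.rep x / dotL w'.rep x with hc
    have hc0 : c ≠ 0 := div_ne_zero hx hx'
    have hfg : dotL w.rep = c • dotL w'.rep := by
      refine Module.Dual.eq_of_ker_eq_of_apply_eq x ?_ ?_ hx
      · rw [hk, LinearMap.ker_smul _ c hc0]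
      · show dotL w.rep x = c * dotL w'.rep x
        rw [hc, div_mul_cancel₀ _ hx']
    have hrep : w.rep = c • w'.rep := dotL_injective (by rw [map_smul, hfg])
    have h2 := (Projectivization.mk_eq_mk_iff (ZMod 11) w.rep w'.rep
      w.rep_nonzero w'.rep_nonzero).mpr ⟨Units.mk0 c hc0, hrep.symm⟩
    rwa [w.mk_rep, w'.mk_rep] at h2
  · rintro ⟨W, hW⟩
    have hfr : finrank (ZMod 11) W.dualAnnihilator = 1 := by
      have h1 : finrank (ZMod 11) ((Fin 3 → ZMod 11) ⧸ W) = finrank (ZMod 11) W.dualAnnihilator :=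
        LinearEquiv.finrank_eq (Subspace.quotEquivAnnihilator W)
      have h2 := W.finrank_quotient_add_finrank
      rw [Module.finrank_fin_fun] at h2
      omega
    have hne : W.dualAnnihilator ≠ ⊥ := by
      intro h
      rw [h] at hfr
      simp at hfr
    obtain ⟨φ, hφmem, hφ0⟩ := (Submodule.ne_bot_iff _).mp hne
    obtain ⟨u, rfl⟩ := dotL_bijective.2 φ
    have hu : u ≠ 0 := by
      intro h
      exact hφ0 (by rw [h, map_zero])
    have hWker : W = LinearMap.ker (dotL u) := by
      apply (Submodule.eq_of_le_of_finrank_eq ?_ ?_)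
      · intro w hw
        rw [LinearMap.mem_ker]
        exact (Submodule.mem_dualAnnihilator _).mp hφmem w hw
      · rw [hW, finrank_ker_dotL hu]
    exact ⟨Projectivization.mk (ZMod 11) u hu, by rw [ptLine_mk hu]; exact Subtype.ext hWker.symm⟩

def lineEquiv : PGPoint ≃ PGLine := Equiv.ofBijective ptLine ptLine_bijective

instance : Finite PGPoint :=
  Quotient.finite (projectivizationSetoid (ZMod 11) V3)
instance : Fintype PGPoint := Fintype.ofFinite _
instance : Fintype PGLine := Fintype.ofFinite _

lemma card_PGPoint : Fintype.card PGPoint = 133 := by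
  classical
  let f : {v : V3 // v ≠ 0} → PGPoint := fun v => Projectivization.mk (ZMod 11) v.1 v.2
  have hfib : ∀ P : PGPoint, Fintype.card {v : {v : V3 // v ≠ 0} // f v = P} = 10 := by
    intro P
    have e : (ZMod 11)ˣ ≃ {v : {v : V3 // v ≠ 0} // f v = P} := by
      refine Equiv.ofBijective (fun a => ⟨⟨(a : ZMod 11) • P.rep,
        smul_ne_zero a.ne_zero P.rep_nonzero⟩, ?_⟩) ⟨?_, ?_⟩
      · show Projectivization.mk (ZMod 11) ((a : ZMod 11) • P.rep) _ = P
        have := (Projectivization.mk_eq_mk_iff (ZMod 11) ((a : ZMod 11) • P.rep) P.rep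
          (smul_ne_zero a.ne_zero P.rep_nonzero) P.rep_nonzero).mpr ⟨a, rfl⟩
        rw [this, P.mk_rep]
      · intro a b hab
        have h1 : (a : ZMod 11) • P.rep = (b : ZMod 11) • P.rep := by
          have := congrArg (fun z => z.1.1) hab
          exact this
        obtain ⟨i, hi⟩ : ∃ i, P.rep i ≠ 0 := by
          by_contra hc
          push_neg at hc
          exact P.rep_nonzero (funext hc)
        have := congrFun h1 i
        simp only [Pi.smul_apply, smul_eq_mul] at this
        exact Units.ext (mul_right_cancel₀ hi this)
      · rintro ⟨⟨v, hv⟩, hfv⟩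
        have : Projectivization.mk (ZMod 11) v hv = P := hfv
        rw [← P.mk_rep, Projectivization.mk_eq_mk_iff] at this
        obtain ⟨a, ha⟩ := this
        refine ⟨a, ?_⟩
        apply Subtype.ext
        apply Subtype.ext
        show (a : ZMod 11) • P.rep = v
        rw [← Units.smul_def, ha]
    rw [← Fintype.card_congr e]
    have : Fintype.card (ZMod 11)ˣ = 10 := by rw [ZMod.card_units]
    exact this
  have h1 : Fintype.card {v : V3 // v ≠ 0} = 1330 := by
    have h0 : Fintype.card {v : V3 // ¬ v = 0} = Fintype.card V3 - Fintype.card {v : V3 // v = 0} :=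
      Fintype.card_subtype_compl _
    have hV : Fintype.card V3 = 1331 := by
      rw [Fintype.card_fun]
      simp [ZMod.card]
    have h00 : Fintype.card {v : V3 // v = 0} = 1 := Fintype.card_subtype_eq 0
    simp only [ne_eq]
    rw [h0, hV, h00]
  have h2 : Fintype.card {v : V3 // v ≠ 0} = 10 * Fintype.card PGPoint := by
    rw [← Fintype.card_congr (Equiv.sigmaFiberEquiv f), Fintype.card_sigma]
    simp only [hfib]
    rw [Finset.sum_const, Finset.card_univ, smul_eq_mul, mul_comm]
  rw [h1] at h2
  omega

lemma card_PGLine : Fintype.card PGLine = 133 := by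
  rw [← Fintype.card_congr lineEquiv, card_PGPoint]

lemma order_eq : ProjectivePlane.order PGPoint PGPoint = 11 := by
  have h := ProjectivePlane.card_points PGPoint PGPoint
  rw [card_PGPoint] at h
  set n := ProjectivePlane.order PGPoint PGPoint with hn
  have hle : n ≤ 11 := by nlinarith
  interval_cases n <;> omega

lemma card_lines_through (P : PGPoint) : Nat.card {L : PGLine // PGmem P L} = 12 := by
  have e : {w : PGPoint // w ∈ P} ≃ {L : PGLine // PGmem P L} :=
    Equiv.subtypeEquiv lineEquiv (fun w => by
      show w ∈ P ↔ PGmem P (ptLine w)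
      rw [PGmem_ptLine]
      exact Iff.rfl)
  rw [← Nat.card_congr e]
  have : Nat.card {w : PGPoint // w ∈ P} = ProjectivePlane.order PGPoint PGPoint + 1 :=
    ProjectivePlane.pointCount_eq PGPoint P
  rw [this, order_eq]

lemma existsUnique_line {P Q : PGPoint} (h : P ≠ Q) : ∃! L : PGLine, PGmem P L ∧ PGmem Q L := by
  obtain ⟨w, ⟨hw1, hw2⟩, hu⟩ := HasPoints.existsUnique_point PGPoint PGPoint P Q h
  refine ⟨ptLine w, ⟨(PGmem_ptLine P w).mpr hw1, (PGmem_ptLine Q w).mpr hw2⟩, ?_⟩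
  intro L ⟨hL1, hL2⟩
  obtain ⟨w', rfl⟩ := ptLine_bijective.2 L
  have := hu w' ⟨(PGmem_ptLine P w').mp hL1, (PGmem_ptLine Q w').mp hL2⟩
  rw [this]

end

theorem x4_mod_three_and_x6_lower_bound (S : Set PGPoint) (hS : IsBlockingSemioval S) (hcard : S.ncard = 25)
    (hmax : ∀ L : PGLine, (secantPts S L).ncard ≤ 6)
    (x : ℕ → ℕ) (hx : ∀ i, x i = ({L : PGLine | IsSecant S i L}).ncard) :
    x 4 % 3 = 2 ∧ 9 ≤ x 6 := by
  classical
  obtain ⟨⟨hblock, -⟩, hsemi⟩ := hS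
  have hSfin : S.Finite := Set.toFinite S
  set Sf : Finset PGPoint := hSfin.toFinset with hSf
  have hSfcard : Sf.card = 25 := by
    rw [← hcard, Set.ncard_eq_toFinset_card S hSfin]
  set n : PGLine → ℕ := fun L => (secantPts S L).ncard with hn
  have hsec : ∀ L, secantPts S L = ↑(Sf.filter (fun P => PGmem P L)) := by
    intro L
    ext P
    simp [secantPts, hSf, Set.Finite.mem_toFinset, Set.mem_setOf_eq]
  have hT : ∀ L, n L = (Sf.filter (fun P => PGmem P L)).card := by
    intro L
    rw [hn]
    simp only
    rw [hsec L, Set.ncard_coe_finset]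
  have hxf : ∀ i, x i = (Finset.univ.filter (fun L => n L = i)).card := by
    intro i
    rw [hx i]
    have h : {L : PGLine | IsSecant S i L} = ↑(Finset.univ.filter (fun L => n L = i)) := by
      ext L
      simp [IsSecant, hn]
    rw [h, Set.ncard_coe_finset]
  -- Equation 1
  have hmem : ∀ L ∈ (Finset.univ : Finset PGLine), n L ∈ Finset.Icc 1 6 := by
    intro L _
    rw [Finset.mem_Icc]
    constructor
    · have : 0 < n L := (Set.ncard_pos (Set.toFinite _)).mpr (hblock L)
      omega
    · exact hmax L
  have e1 : ∑ i ∈ Finset.Icc 1 6, x i = 133 := by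
    simp only [hxf]
    rw [← Finset.card_eq_sum_card_fiberwise hmem, Finset.card_univ, card_PGLine]
  -- Equation 2
  have key12 : ∀ P : PGPoint, (Finset.univ.filter (fun L => PGmem P L)).card = 12 := by
    intro P
    have h := card_lines_through P
    rwa [Nat.card_eq_fintype_card, Fintype.card_subtype] at h
  have e2 : ∑ L : PGLine, n L = 300 := by
    calc ∑ L : PGLine, n L
        = ∑ L : PGLine, ∑ P ∈ Sf, if PGmem P L then 1 else 0 := by
          refine Finset.sum_congr rfl (fun L _ => ?_)
          rw [hT L, Finset.card_filter]
      _ = ∑ P ∈ Sf, ∑ L : PGLine, if PGmem P L then 1 else 0 := Finset.sum_comm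
      _ = ∑ P ∈ Sf, (Finset.univ.filter (fun L => PGmem P L)).card := by
          refine Finset.sum_congr rfl (fun P _ => ?_)
          rw [Finset.card_filter]
      _ = ∑ P ∈ Sf, 12 := Finset.sum_congr rfl (fun P _ => key12 P)
      _ = 300 := by rw [Finset.sum_const, hSfcard, smul_eq_mul]
  -- Equation 3
  have keyU : ∀ pq ∈ Sf.offDiag,
      (Finset.univ.filter (fun L => PGmem pq.1 L ∧ PGmem pq.2 L)).card = 1 := by
    intro pq hpq
    obtain ⟨L0, hL0, hun⟩ := existsUnique_line (Finset.mem_offDiag.mp hpq).2.2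
    rw [Finset.card_eq_one]
    refine ⟨L0, ?_⟩
    ext L
    simp only [Finset.mem_filter, Finset.mem_univ, true_and, Finset.mem_singleton]
    exact ⟨fun h => hun L h, fun h => h ▸ hL0⟩
  have hoff : ∀ L, (Sf.filter (fun P => PGmem P L)).offDiag
      = Sf.offDiag.filter (fun pq => PGmem pq.1 L ∧ PGmem pq.2 L) := by
    intro L
    ext ⟨a, b⟩
    simp only [Finset.mem_offDiag, Finset.mem_filter]
    tauto
  have e3 : ∑ L : PGLine, (n L * n L - n L) = 600 := by
    calc ∑ L : PGLine, (n L * n L - n L)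
        = ∑ L : PGLine, (Sf.filter (fun P => PGmem P L)).offDiag.card := by
          refine Finset.sum_congr rfl (fun L _ => ?_)
          rw [hT L, Finset.offDiag_card]
      _ = ∑ L : PGLine, ∑ pq ∈ Sf.offDiag, if PGmem pq.1 L ∧ PGmem pq.2 L then 1 else 0 := by
          refine Finset.sum_congr rfl (fun L _ => ?_)
          rw [hoff L, Finset.card_filter]
      _ = ∑ pq ∈ Sf.offDiag, ∑ L : PGLine, if PGmem pq.1 L ∧ PGmem pq.2 L then 1 else 0 :=
          Finset.sum_comm
      _ = ∑ pq ∈ Sf.offDiag, (Finset.univ.filter (fun L => PGmem pq.1 L ∧ PGmem pq.2 L)).card := by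
          refine Finset.sum_congr rfl (fun pq _ => ?_)
          rw [Finset.card_filter]
      _ = ∑ pq ∈ Sf.offDiag, 1 := Finset.sum_congr rfl keyU
      _ = 600 := by rw [Finset.sum_const, Finset.offDiag_card, hSfcard, smul_eq_mul]
  -- group by fiber
  have g2 : ∑ i ∈ Finset.Icc 1 6, i * x i = 300 := by
    rw [← e2, ← Finset.sum_fiberwise_of_maps_to hmem (fun L => n L)]
    refine Finset.sum_congr rfl (fun i _ => ?_)
    rw [hxf i]
    rw [Finset.sum_congr rfl (fun L hL => (Finset.mem_filter.mp hL).2),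
      Finset.sum_const, smul_eq_mul, mul_comm]
  have g3 : ∑ i ∈ Finset.Icc 1 6, (i * i - i) * x i = 600 := by
    rw [← e3, ← Finset.sum_fiberwise_of_maps_to hmem (fun L => n L * n L - n L)]
    refine Finset.sum_congr rfl (fun i _ => ?_)
    rw [hxf i]
    rw [Finset.sum_congr rfl (fun L hL => by rw [(Finset.mem_filter.mp hL).2]),
      Finset.sum_const, smul_eq_mul, mul_comm]
  -- x 1 = 25
  have hx1 : x 1 = 25 := by
    have hset : ∀ L : {L : PGLine // IsSecant S 1 L}, ∃ a, secantPts S L.1 = {a} :=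
      fun L => Set.ncard_eq_one.mp L.2
    let F : {L : PGLine // IsSecant S 1 L} → {P : PGPoint // P ∈ S} := fun L =>
      ⟨(hset L).choose, by
        have h := (hset L).choose_spec
        have : (hset L).choose ∈ secantPts S L.1 := (Set.ext_iff.mp h _).mpr rfl
        exact this.1⟩
    have hmemF : ∀ L : {L : PGLine // IsSecant S 1 L},
        (F L).1 ∈ S ∧ PGmem (F L).1 L.1 := by
      intro L
      have h := (hset L).choose_spec
      have : (hset L).choose ∈ secantPts S L.1 := (Set.ext_iff.mp h _).mpr rfl
      exact this
    have hbij : Function.Bijective F := by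
      constructor
      · intro L1 L2 hF
        have h1 := hmemF L1
        have h2 := hmemF L2
        rw [hF] at h1
        obtain ⟨Lt, hLt, hu⟩ := hsemi (F L2).1 h2.1
        have e1' := hu L1.1 ⟨h1.2, L1.2⟩
        have e2' := hu L2.1 ⟨h2.2, L2.2⟩
        exact Subtype.ext (e1'.trans e2'.symm)
      · rintro ⟨P, hP⟩
        obtain ⟨L, ⟨hPL, htan⟩, -⟩ := hsemi P hP
        refine ⟨⟨L, htan⟩, ?_⟩
        have h := (hset ⟨L, htan⟩).choose_spec
        have hPm : P ∈ secantPts S L := ⟨hP, hPL⟩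
        have := (Set.ext_iff.mp h P).mp hPm
        exact Subtype.ext (Set.mem_singleton_iff.mp this).symm
    have hcardeq := Nat.card_eq_of_bijective F hbij
    have h1 : Nat.card {L : PGLine // IsSecant S 1 L} = x 1 := by
      rw [hx 1, ← Nat.card_coe_set_eq]
      rfl
    have h2 : Nat.card {P : PGPoint // P ∈ S} = 25 := by
      rw [← hcard, ← Nat.card_coe_set_eq]
    rw [h1, h2] at hcardeq
    omega
  -- finish
  have hIcc : (Finset.Icc 1 6 : Finset ℕ) = {1, 2, 3, 4, 5, 6} := by decide
  rw [hIcc] at e1 g2 g3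
  norm_num [Finset.sum_insert, Finset.mem_insert] at e1 g2 g3
  omega
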